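/- For the Polar Coordinates point set P_n, there exists r > 0 such that for all unit vectors u with ‖u − N‖ < r (N the North Pole), any plane with normal vector u intersects at most one orbit of P_n; consequently any cap with normal direction u contains, on its boundary, points from at most one latitude circle of P_n. -/

import Mathlib

open Metric Real
noncomputable section
abbrev E3 := EuclideanSpace ℝ (Fin 3)

/-- The North Pole `(0,0,1)`. -/
def NP : E3 := (WithLp.equiv 2 (Fin 3 → ℝ)).symm ![0, 0, 1]

set_option maxHeartbeats 1000000 in
/-- For the Polar Coordinates set `P_n`, whose orbits are the latitude circles
`{x ∈ S² : x₃ = sin (πj/n − π/2)}`, `j = 1, …, n−1`, there is `r > 0` such that any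
plane whose unit normal is within distance `r` of the North Pole meets at most one
orbit. -/
theorem stmt19 (n : ℕ) (hn : 1 ≤ n) :
    ∃ r : ℝ, 0 < r ∧ ∀ u : E3, ‖u‖ = 1 → ‖u - NP‖ < r → ∀ h : ℝ,
      ∀ j k : ℕ, 1 ≤ j → j < k → k ≤ n - 1 →
        ¬ ((∃ x : E3, x ∈ sphere (0 : E3) 1 ∧ x 2 = Real.sin (π * j / n - π / 2) ∧
              (inner ℝ u x : ℝ) = h) ∧
           (∃ y : E3, y ∈ sphere (0 : E3) 1 ∧ y 2 = Real.sin (π * k / n - π / 2) ∧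
              (inner ℝ u y : ℝ) = h)) := by
  by_cases hn3 : n ≤ 2
  · exact ⟨1, one_pos, fun u _ _ h j k hj hjk hk => by omega⟩
  push_neg at hn3
  set S := (Finset.Icc 1 (n-1) ×ˢ Finset.Icc 1 (n-1)).filter (fun p => p.1 < p.2) with hSdef
  have hS : S.Nonempty := ⟨(1,2), by simp [hSdef]; omega⟩
  set δ := S.inf' hS (fun p => Real.cos (π*p.1/n) - Real.cos (π*p.2/n)) with hδdef
  have hnpos : (0:ℝ) < n := by positivity
  have key : ∀ p ∈ S, 0 < Real.cos (π*p.1/n) - Real.cos (π*p.2/n) := by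
    rintro ⟨a, b⟩ hab
    simp [hSdef] at hab
    obtain ⟨⟨⟨ha1, ha2⟩, hb1, hb2⟩, hab⟩ := hab
    have hb2' : (b:ℝ) ≤ n := by exact_mod_cast (by omega : b ≤ n)
    have : Real.cos (π*b/n) < Real.cos (π*a/n) := by
      apply Real.cos_lt_cos_of_nonneg_of_le_pi
      · positivity
      · rw [div_le_iff₀ hnpos]; nlinarith [Real.pi_pos]
      · have : (a:ℝ) < b := by exact_mod_cast hab
        rw [div_lt_div_iff₀ hnpos hnpos]
        have h2 := mul_lt_mul_of_pos_right (mul_lt_mul_of_pos_left this Real.pi_pos) hnpos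
        linarith
    linarith
  have hδpos : 0 < δ := by
    rw [hδdef, Finset.lt_inf'_iff]
    exact key
  refine ⟨δ/5, by positivity, ?_⟩
  intro u hu hur h j k hj hjk hk
  rintro ⟨⟨x, hx, hx2, hxh⟩, ⟨y, hy, hy2, hyh⟩⟩
  have hmem : (j, k) ∈ S := by simp [hSdef]; omega
  have hδle : δ ≤ Real.cos (π*j/n) - Real.cos (π*k/n) := Finset.inf'_le _ hmem
  have hδ2 : δ ≤ 2 := by
    have := Real.cos_le_one (π*j/n)
    have := Real.neg_one_le_cos (π*k/n)
    linarith
  clear hδdef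
  clear_value δ
  -- norms to coordinates
  have norm_sq : ∀ z : E3, ‖z‖ = 1 → z 0 ^2 + z 1 ^2 + z 2 ^2 = 1 := by
    intro z hz
    rw [EuclideanSpace.norm_eq] at hz
    simp [Fin.sum_univ_three, sq_abs] at hz
    nlinarith [Real.sq_sqrt (by positivity : (0:ℝ) ≤ z 0 ^2 + z 1 ^2 + z 2 ^2)]
  have hxs := norm_sq x (mem_sphere_zero_iff_norm.mp hx)
  have hys := norm_sq y (mem_sphere_zero_iff_norm.mp hy)
  have hus := norm_sq u hu
  have hunp : (u 0)^2 + (u 1)^2 + (u 2 - 1)^2 < (δ/5)^2 := by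
    rw [EuclideanSpace.norm_eq] at hur
    simp [Fin.sum_univ_three, NP, sq_abs, WithLp.equiv_symm_apply, PiLp.toLp_apply] at hur
    rw [Real.sqrt_lt' (by positivity)] at hur
    convert hur using 2
  have hix : (inner ℝ u x : ℝ) = u 0 * x 0 + u 1 * x 1 + u 2 * x 2 := by
    simp [PiLp.inner_apply, RCLike.inner_apply, conj_trivial, Fin.sum_univ_three, mul_comm]
  have hiy : (inner ℝ u y : ℝ) = u 0 * y 0 + u 1 * y 1 + u 2 * y 2 := by
    simp [PiLp.inner_apply, RCLike.inner_apply, conj_trivial, Fin.sum_univ_three, mul_comm]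
  rw [hix, hx2, Real.sin_sub_pi_div_two] at hxh
  rw [hiy, hy2, Real.sin_sub_pi_div_two] at hyh
  rw [Real.sin_sub_pi_div_two] at hx2 hy2
  clear hix hiy hx hy hur hu hmem hS
  -- x 2 = -cos(πj/n), so x0²+x1² = 1 - cos²
  have hx01 : x 0 ^2 + x 1 ^2 ≤ 1 := by linarith [sq_nonneg (x 2)]
  have hy01 : y 0 ^2 + y 1 ^2 ≤ 1 := by linarith [sq_nonneg (y 2)]
  have hA : (u 0 * x 0 + u 1 * x 1)^2 ≤ (δ/5)^2 := by
    nlinarith [sq_nonneg (u 0 * x 1 - u 1 * x 0), sq_nonneg (u 2 - 1), sq_nonneg (u 0 ^2 + u 1 ^2)]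
  have hB : (u 0 * y 0 + u 1 * y 1)^2 ≤ (δ/5)^2 := by
    nlinarith [sq_nonneg (u 0 * y 1 - u 1 * y 0), sq_nonneg (u 2 - 1), sq_nonneg (u 0 ^2 + u 1 ^2)]
  have hu2 : 1 - δ/5 < u 2 := by nlinarith [sq_nonneg (u 0), sq_nonneg (u 1)]
  have hA' : u 0 * x 0 + u 1 * x 1 ≤ δ/5 := by
    nlinarith [sq_nonneg (u 0 * x 0 + u 1 * x 1 - δ/5)]
  have hB' : -(δ/5) ≤ u 0 * y 0 + u 1 * y 1 := by
    nlinarith [sq_nonneg (u 0 * y 0 + u 1 * y 1 + δ/5)]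
  have hu2' : (3:ℝ)/5 ≤ u 2 := by linarith
  have heq : (u 0 * x 0 + u 1 * x 1) - (u 0 * y 0 + u 1 * y 1)
      = u 2 * (cos (π * j / n) - cos (π * k / n)) := by linear_combination hxh - hyh
  have hmul : (3:ℝ)/5 * δ ≤ u 2 * (cos (π * j / n) - cos (π * k / n)) :=
    mul_le_mul hu2' hδle hδpos.le (by linarith)
  linarith
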